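/- arXiv:1508.06430 — 2 statements merged into one kernel-verified Lean document; each statement's English description precedes it below -/
import Mathlib

section
/- Intervals in a median graph are convex: for any vertices u, v of a median graph, the interval I(u,v) is a convex set of vertices. -/
/-- The interval between two vertices: all vertices lying on a shortest path,
i.e. `w` with `d(u,w) + d(w,v) = d(u,v)`. -/
def SimpleGraph.interval {V : Type*} (Γ : SimpleGraph V) (u v : V) : Set V :=
  {w | Γ.dist u w + Γ.dist w v = Γ.dist u v}

/-- A set of vertices is convex if it contains the interval between any two of its members. -/
def SimpleGraph.IsConvexSet {V : Type*} (Γ : SimpleGraph V) (X : Set V) : Prop :=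
  ∀ u ∈ X, ∀ v ∈ X, Γ.interval u v ⊆ X

/-- A (connected) graph is median if every triple of vertices has a unique median vertex. -/
def SimpleGraph.IsMedian {V : Type*} (Γ : SimpleGraph V) : Prop :=
  Γ.Connected ∧ ∀ x y z : V, ∃! m : V,
    m ∈ Γ.interval x y ∩ Γ.interval y z ∩ Γ.interval x z

private lemma mem_interval_iff {V : Type*} (Γ : SimpleGraph V) {u v w : V} :
    w ∈ Γ.interval u v ↔ Γ.dist u w + Γ.dist w v = Γ.dist u v := Iff.rfl

/-- Intervals in a median graph are convex. -/
theorem interval_isConvex {V : Type*} (Γ : SimpleGraph V) (hΓ : Γ.IsMedian) (u v : V) :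
    Γ.IsConvexSet (Γ.interval u v) := by
  obtain ⟨hconn, hmed⟩ := hΓ
  have tri : ∀ a b c : V, Γ.dist a c ≤ Γ.dist a b + Γ.dist b c := fun a b c =>
    hconn.dist_triangle
  have dc : ∀ a b : V, Γ.dist a b = Γ.dist b a := fun a b => SimpleGraph.dist_comm
  have dzero : ∀ a b : V, Γ.dist a b = 0 ↔ a = b := fun a b => hconn.dist_eq_zero_iff
  suffices H : ∀ n : ℕ, ∀ x y : V, Γ.dist x y = n → x ∈ Γ.interval u v → y ∈ Γ.interval u v →
      ∀ w ∈ Γ.interval x y, w ∈ Γ.interval u v by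
    intro x hx y hy w hw
    exact H _ x y rfl hx hy w hw
  intro n
  induction n using Nat.strong_induction_on with
  | _ n ih =>
  intro x y hn hx hy w hw
  rw [mem_interval_iff] at hx hy hw ⊢
  -- the four medians
  obtain ⟨p, ⟨⟨hp1, hp2⟩, hp3⟩, -⟩ := hmed u w y
  obtain ⟨q, ⟨⟨hq1, hq2⟩, hq3⟩, -⟩ := hmed v w x
  obtain ⟨s, ⟨⟨hs1, hs2⟩, hs3⟩, -⟩ := hmed u w x
  obtain ⟨t, ⟨⟨ht1, ht2⟩, ht3⟩, -⟩ := hmed v w y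
  rw [mem_interval_iff] at hp1 hp2 hp3 hq1 hq2 hq3 hs1 hs2 hs3 ht1 ht2 ht3
  by_cases hpy : p = y
  · by_cases hqx : q = x
    · by_cases hsx : s = x
      · by_cases hty : t = y
        · -- degenerate case: x and y are both medians of (u, w, v)
          rw [hpy] at hp1
          rw [hqx] at hq1
          rw [hsx] at hs1
          rw [hty] at ht1
          obtain ⟨m, -, hmu⟩ := hmed u w v
          have hxm : x = m := by
            refine hmu x ⟨⟨?_, ?_⟩, ?_⟩ <;> rw [mem_interval_iff]
            · exact hs1
            · have c1 := dc w x; have c2 := dc x v; have c3 := dc v w; omega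
            · exact hx
          have hym : y = m := by
            refine hmu y ⟨⟨?_, ?_⟩, ?_⟩ <;> rw [mem_interval_iff]
            · exact hp1
            · have c1 := dc w y; have c2 := dc y v; have c3 := dc v w; omega
            · exact hy
          have hxy : Γ.dist x y = 0 := (dzero x y).mpr (hxm.trans hym.symm)
          have hxw : x = w := (dzero x w).mp (by omega)
          rw [← hxw]; exact hx
        · -- reduce pair (x, y) to (x, t) : t ∈ I(w,y), t ∈ I(v,y)
          have htv : Γ.dist u t + Γ.dist t v = Γ.dist u v := by
            have t1 := tri u y t
            have t2 := tri u t v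
            have t3 := tri t y v
            have c1 := dc v t; have c2 := dc y t; have c3 := dc v y; have c4 := dc y v
            omega
          have hwxt : Γ.dist x w + Γ.dist w t = Γ.dist x t := by
            have t1 := tri x w t
            have t2 := tri x t y
            have c1 := dc w t; omega
          have hlt : Γ.dist x t < n := by
            have hty' : Γ.dist t y ≠ 0 := fun h => hty ((dzero t y).mp h)
            have c1 := dc w t
            omega
          exact ih _ hlt x t rfl hx htv w hwxt
      · -- reduce pair (x, y) to (s, y) : s ∈ I(w,x), s ∈ I(u,x)
        have hsv : Γ.dist u s + Γ.dist s v = Γ.dist u v := by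
          have t1 := tri s x v
          have t2 := tri u s v
          omega
        have hwsy : Γ.dist s w + Γ.dist w y = Γ.dist s y := by
          have t1 := tri s w y
          have t2 := tri x s y
          have c1 := dc w s; have c2 := dc s x; have c3 := dc x s; have c4 := dc x w
          omega
        have hlt : Γ.dist s y < n := by
          have hsx' : Γ.dist s x ≠ 0 := fun h => hsx ((dzero s x).mp h)
          have t2 := tri x s y
          have c1 := dc s x; have c2 := dc w s; have c3 := dc x w
          omega
        exact ih _ hlt s y rfl hsv hy w hwsy
    · -- reduce pair (x, y) to (q, y) : q ∈ I(w,x), q ∈ I(v,x)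
      have hqv : Γ.dist u q + Γ.dist q v = Γ.dist u v := by
        have t1 := tri u x q
        have t2 := tri u q v
        have t3 := tri q x v
        have c1 := dc v q; have c2 := dc x q; have c3 := dc v x; have c4 := dc x v
        omega
      have hwqy : Γ.dist q w + Γ.dist w y = Γ.dist q y := by
        have t1 := tri q w y
        have t2 := tri x q y
        have c1 := dc w q; have c2 := dc x q; have c3 := dc x w
        omega
      have hlt : Γ.dist q y < n := by
        have hqx' : Γ.dist q x ≠ 0 := fun h => hqx ((dzero q x).mp h)
        have t2 := tri x q y
        have c1 := dc x q; have c2 := dc w q; have c3 := dc x w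
        omega
      exact ih _ hlt q y rfl hqv hy w hwqy
  · -- reduce pair (x, y) to (x, p) : p ∈ I(w,y), p ∈ I(u,y)
    have hpv : Γ.dist u p + Γ.dist p v = Γ.dist u v := by
      have t1 := tri u p v
      have t2 := tri p y v
      omega
    have hwxp : Γ.dist x w + Γ.dist w p = Γ.dist x p := by
      have t1 := tri x w p
      have t2 := tri x p y
      have c1 := dc w p
      omega
    have hlt : Γ.dist x p < n := by
      have hpy' : Γ.dist p y ≠ 0 := fun h => hpy ((dzero p y).mp h)
      have t2 := tri x p y
      have c1 := dc w p
      omega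
    exact ih _ hlt x p rfl hx hpv w hwxp
end

section
/- For n ≥ 3, Aut(F_n) is generated by the four elements ρ₁₂, e₁, the transposition (x₁,x₂), and the cycle (x₁,x₂,…,x_n) (the automorphism permuting the basis cyclically). -/
set_option linter.unusedSectionVars false

namespace NielsenAux
open FreeGroup List

variable {α : Type*} [DecidableEq α]

/-- a word is reduced: no adjacent cancelling pair. -/
def NR (L : List (α × Bool)) : Prop :=
  List.Chain' (fun a b => ¬(a.1 = b.1 ∧ a.2 = !b.2)) L

lemma nr_reduce (L : List (α × Bool)) : NR (reduce L) := by
  induction L with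
  | nil => simp [NR, List.Chain']
  | cons x L ih =>
    rcases h : reduce L with _ | ⟨hd, tl⟩
    · rw [FreeGroup.reduce.cons, h]; simp [NR, List.Chain']
    · rw [h] at ih
      rw [FreeGroup.reduce.cons, h]
      by_cases hc : x.1 = hd.1 ∧ x.2 = !hd.2
      · simpa only [if_pos hc] using (show NR tl from ih.tail)
      · simpa only [if_neg hc] using (show NR (x :: hd :: tl) from List.isChain_cons_cons.2 ⟨hc, ih⟩)

lemma reduce_eq_self (L : List (α × Bool)) (h : NR L) : reduce L = L := by
  induction L with
  | nil => rfl
  | cons x L ih =>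
    have hL : reduce L = L := ih h.tail
    rw [FreeGroup.reduce.cons, hL]
    cases L with
    | nil => rfl
    | cons hd tl =>
      have : ¬(x.1 = hd.1 ∧ x.2 = !hd.2) := (List.isChain_cons_cons.1 h).1
      simp [this]

lemma nr_toWord (x : FreeGroup α) : NR x.toWord := by
  rw [← FreeGroup.reduce_toWord]; exact nr_reduce _

lemma toWord_mk_of_nr {L : List (α × Bool)} (h : NR L) : (FreeGroup.mk L).toWord = L := by
  rw [FreeGroup.toWord_mk, reduce_eq_self _ h]

lemma invRev_append (L₁ L₂ : List (α × Bool)) :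
    FreeGroup.invRev (L₁ ++ L₂) = FreeGroup.invRev L₂ ++ FreeGroup.invRev L₁ := by
  simp [FreeGroup.invRev]

lemma invRev_singleton (z : α × Bool) : FreeGroup.invRev [z] = [(z.1, !z.2)] := by
  simp [FreeGroup.invRev]

lemma nr_no_cancel_pair {l₁ l₂ : List (α × Bool)} {z : α × Bool}
    (h : NR (l₁ ++ z :: (z.1, !z.2) :: l₂)) : False := by
  have h2 : List.Chain' (fun a b : α × Bool => ¬(a.1 = b.1 ∧ a.2 = !b.2)) [z, (z.1, !z.2)] :=
    h.infix ⟨l₁, l₂, by simp⟩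
  have := List.isChain_pair.1 h2
  simp at this

/-- junction lemma: `invRev s ++ s` is never reduced unless `s = []`. -/
lemma nr_invRev_append_self {s : List (α × Bool)} (h : NR (FreeGroup.invRev s ++ s)) :
    s = [] := by
  cases s with
  | nil => rfl
  | cons z s' =>
    exfalso
    have : FreeGroup.invRev (z :: s') = FreeGroup.invRev s' ++ [(z.1, !z.2)] := by
      rw [show z :: s' = [z] ++ s' from rfl, invRev_append, invRev_singleton]
    rw [this] at h
    refine nr_no_cancel_pair (l₁ := FreeGroup.invRev s') (l₂ := s') (z := (z.1, !z.2)) ?_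
    simpa using h

/-- an anti-palindromic reduced word is empty. -/
lemma nr_invRev_eq_self {t : List (α × Bool)} (h : NR t) (he : FreeGroup.invRev t = t) :
    t = [] := by
  generalize hk : t.length = k
  induction k using Nat.strong_induction_on generalizing t with
  | _ k ih =>
  cases t with
  | nil => rfl
  | cons hd t' =>
    exfalso
    rcases List.eq_nil_or_concat t' with rfl | ⟨mid, lst, rfl⟩
    · -- t = [hd]
      have : FreeGroup.invRev [hd] = [hd] := he
      rw [invRev_singleton] at this
      have := List.head_eq_of_cons_eq this
      have h2 : hd.2 = !hd.2 := congrArg Prod.snd this.symm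
      simp at h2
    · -- t = hd :: mid ++ [lst]
      simp only [List.concat_eq_append] at h he hk
      have hinv : FreeGroup.invRev (hd :: (mid ++ [lst]))
          = (lst.1, !lst.2) :: (FreeGroup.invRev mid ++ [(hd.1, !hd.2)]) := by
        rw [show hd :: (mid ++ [lst]) = ([hd] ++ mid) ++ [lst] from by simp,
          invRev_append, invRev_append, invRev_singleton, invRev_singleton]
        simp
      rw [hinv] at he
      have hhd : (lst.1, !lst.2) = hd := List.head_eq_of_cons_eq he
      have htl : FreeGroup.invRev mid ++ [(hd.1, !hd.2)] = mid ++ [lst] :=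
        List.tail_eq_of_cons_eq he
      have hlen : (FreeGroup.invRev mid).length = mid.length := FreeGroup.invRev_length
      obtain ⟨hmid', hl'⟩ := List.append_inj htl hlen
      have hlst : (hd.1, !hd.2) = lst := by
        have := List.head_eq_of_cons_eq hl'
        exact this
      have hmid : mid = [] := by
        refine ih mid.length ?_ ?_ hmid' rfl
        · have : (hd :: (mid ++ [lst])).length = mid.length + 2 := by simp
          omega
        · exact (h.tail).prefix ⟨[lst], by simp⟩
      subst hmid
      have : lst = (hd.1, !hd.2) := hlst.symm
      subst this
      exact nr_no_cancel_pair (l₁ := []) (h := by simpa using h)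

/-- Word-level maximal cancellation decomposition. -/
lemma exists_cancel_word (u : List (α × Bool)) : ∀ (v : List (α × Bool)), NR u → NR v →
    ∃ a c b, u = a ++ c ∧ v = FreeGroup.invRev c ++ b ∧ NR (a ++ b) ∧
      reduce (u ++ v) = a ++ b := by
  induction u using List.reverseRecOn with
  | nil =>
    intro v _ hv
    exact ⟨[], [], v, rfl, by simp [FreeGroup.invRev], by simpa using hv,
      by simpa using reduce_eq_self v hv⟩
  | append_singleton xa p ih =>
    intro v hu hv
    by_cases hnr : NR ((xa ++ [p]) ++ v)
    · exact ⟨xa ++ [p], [], v, by simp, by simp [FreeGroup.invRev], hnr,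
        reduce_eq_self _ hnr⟩
    · -- junction must cancel
      cases v with
      | nil => exact absurd (by simpa using hu) hnr
      | cons q vt =>
        have hjun : p.1 = q.1 ∧ p.2 = !q.2 := by
          by_contra hj
          refine hnr (List.isChain_append.2 ⟨hu, hv, ?_⟩)
          intro x hx y hy
          simp at hx hy
          subst hx; subst hy; exact hj
        have hq : q = (p.1, !p.2) := by
          obtain ⟨h1, h2⟩ := hjun
          ext
          · exact h1.symm
          · simp [h2]
        obtain ⟨a, c, b, hxa, hvt, hab, hred⟩ := ih vt (hu.prefix ⟨[p], rfl⟩) hv.tail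
        refine ⟨a, c ++ [p], b, by rw [hxa]; simp, ?_, hab, ?_⟩
        · rw [invRev_append, invRev_singleton, ← hq, hvt]; simp
        · have hpq : FreeGroup.mk [p] * FreeGroup.mk [q] = 1 := by
            rw [hq, show [(p.1, !p.2)] = FreeGroup.invRev [p] from
              (invRev_singleton p).symm, ← FreeGroup.inv_mk, mul_inv_cancel]
          have hmk : FreeGroup.mk ((xa ++ [p]) ++ (q :: vt)) = FreeGroup.mk (xa ++ vt) := by
            have h1 : (xa ++ [p]) ++ (q :: vt) = xa ++ ([p] ++ ([q] ++ vt)) := by simp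
            rw [h1, ← FreeGroup.mul_mk, ← FreeGroup.mul_mk, ← FreeGroup.mul_mk,
              ← FreeGroup.mul_mk (L₁ := xa), ← mul_assoc (FreeGroup.mk [p]), hpq, one_mul]
          rw [FreeGroup.reduce.sound hmk, hred]

/-- Cancellation decomposition for products in the free group. -/
lemma exists_cancel (x y : FreeGroup α) :
    ∃ a c b, x.toWord = a ++ c ∧ y.toWord = FreeGroup.invRev c ++ b ∧ NR (a ++ b) ∧
      (x * y).toWord = a ++ b := by
  obtain ⟨a, c, b, h1, h2, h3, h4⟩ :=
    exists_cancel_word x.toWord y.toWord (nr_toWord x) (nr_toWord y)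
  refine ⟨a, c, b, h1, h2, h3, ?_⟩
  have : x * y = FreeGroup.mk (x.toWord ++ y.toWord) := by
    rw [← FreeGroup.mul_mk, FreeGroup.mk_toWord, FreeGroup.mk_toWord]
  rw [this, FreeGroup.toWord_mk, h4]

/-- The length of letters cancelled in a product. -/
def cancelLen (x y : FreeGroup α) : ℕ :=
  (FreeGroup.norm x + FreeGroup.norm y - FreeGroup.norm (x * y)) / 2

lemma norm_eq_len (x : FreeGroup α) : FreeGroup.norm x = x.toWord.length := rfl

lemma cancel_spec {x y : FreeGroup α} {a c b : List (α × Bool)}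
    (hx : x.toWord = a ++ c) (hy : y.toWord = FreeGroup.invRev c ++ b)
    (hxy : (x * y).toWord = a ++ b) : c.length = cancelLen x y := by
  have h1 : FreeGroup.norm x = a.length + c.length := by
    rw [norm_eq_len, hx, List.length_append]
  have h2 : FreeGroup.norm y = c.length + b.length := by
    rw [norm_eq_len, hy, List.length_append, FreeGroup.invRev_length]
  have h3 : FreeGroup.norm (x * y) = a.length + b.length := by
    rw [norm_eq_len, hxy, List.length_append]
  rw [cancelLen, h1, h2, h3]
  omega

/-- Maximality: any matching between a suffix of `x` and a prefix of `y` is at most the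
cancellation. -/
lemma cancel_max {x y : FreeGroup α} {a c b a' s b' : List (α × Bool)}
    (hx : x.toWord = a ++ c) (hy : y.toWord = FreeGroup.invRev c ++ b) (hnr : NR (a ++ b))
    (hx' : x.toWord = a' ++ s) (hy' : y.toWord = FreeGroup.invRev s ++ b') :
    s.length ≤ c.length := by
  by_contra hlt
  push_neg at hlt
  have hlen : a'.length + s.length = a.length + c.length := by
    have := congrArg List.length (hx'.symm.trans hx)
    simpa using this
  have hle : a'.length ≤ a.length := by omega
  have ha' : List.take a'.length a = a' := by
    have h1 : List.take a'.length (a' ++ s) = a' := List.take_left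
    have h2 : List.take a'.length (a ++ c) = List.take a'.length a :=
      List.take_append_of_le_length hle
    rw [← hx', hx] at h1
    rw [h2] at h1
    exact h1
  set s₁ := List.drop a'.length a with hs₁
  have ha : a = a' ++ s₁ := by rw [← ha', hs₁, List.take_append_drop]
  have hs : s = s₁ ++ c := by
    have : a' ++ s = a' ++ (s₁ ++ c) := by
      rw [← hx', hx, ha]; simp
    exact List.append_cancel_left this
  have hs₁ne : s₁ ≠ [] := by
    have : s₁.length = a.length - a'.length := by simp [hs₁]
    have hlen2 : s.length = s₁.length + c.length := by rw [hs]; simp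
    intro hh
    rw [hh] at hlen2
    simp at hlen2
    omega
  have hb : b = FreeGroup.invRev s₁ ++ b' := by
    have : FreeGroup.invRev c ++ b = FreeGroup.invRev c ++ (FreeGroup.invRev s₁ ++ b') := by
      rw [← hy, hy', hs, invRev_append]; simp
    exact List.append_cancel_left this
  obtain ⟨s₂, z, hcat⟩ := List.eq_nil_or_concat s₁ |>.resolve_left hs₁ne
  simp only [List.concat_eq_append] at hcat
  rw [hcat] at ha hb
  refine nr_no_cancel_pair (l₁ := a' ++ s₂) (l₂ := FreeGroup.invRev s₂ ++ b') (z := z) ?_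
  have heq : a ++ b = (a' ++ s₂) ++ z :: (z.1, !z.2) :: (FreeGroup.invRev s₂ ++ b') := by
    rw [ha, hb, invRev_append, invRev_singleton]
    simp
  rw [← heq]
  exact hnr

/-- A word cannot overlap with its own inverse on more than half its length. -/
lemma self_overlap {x : FreeGroup α} {a s b : List (α × Bool)}
    (hx1 : x.toWord = a ++ s) (hx2 : x.toWord = FreeGroup.invRev s ++ b)
    (hbig : x.toWord.length ≤ 2 * s.length) : x = 1 := by
  have hlen1 : x.toWord.length = a.length + s.length := by rw [hx1]; simp
  have hlen2 : x.toWord.length = s.length + b.length := by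
    rw [hx2]; simp [FreeGroup.invRev_length]
  have hab : a.length = b.length := by omega
  have has : a.length ≤ s.length := by omega
  -- a is a prefix of invRev s
  have ha : List.take a.length (FreeGroup.invRev s) = a := by
    have h1 : List.take a.length (a ++ s) = a := List.take_left
    have h2 : List.take a.length (FreeGroup.invRev s ++ b) = List.take a.length (FreeGroup.invRev s) :=
      List.take_append_of_le_length (by rwa [FreeGroup.invRev_length])
    rw [← hx1, hx2, h2] at h1
    exact h1
  set t := List.drop a.length (FreeGroup.invRev s) with ht
  have hinv : FreeGroup.invRev s = a ++ t := by rw [← ha, ht, List.take_append_drop]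
  have hst : s = t ++ b := by
    have : a ++ s = a ++ (t ++ b) := by
      rw [← hx1, hx2, hinv]; simp
    exact List.append_cancel_left this
  have htlen : t.length = s.length - a.length := by
    simp [ht, FreeGroup.invRev_length]
  have h5 : FreeGroup.invRev b ++ FreeGroup.invRev t = a ++ t := by
    rw [← invRev_append, ← hst, hinv]
  have hlen5 : (FreeGroup.invRev b).length = a.length := by
    rw [FreeGroup.invRev_length, hab]
  obtain ⟨hba, htt⟩ := List.append_inj h5 hlen5
  have hnrs : NR s := (nr_toWord x).suffix ⟨a, hx1.symm⟩
  have hnrt : NR t := hnrs.prefix ⟨b, hst.symm⟩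
  have ht0 : t = [] := nr_invRev_eq_self hnrt htt
  rw [ht0] at hst
  simp at hst
  subst hst
  have hs0 : s = [] := nr_invRev_append_self (by rw [← hx2]; exact nr_toWord x)
  have : x.toWord = [] := by
    rw [hx2, hs0]; simp [FreeGroup.invRev]
  exact FreeGroup.toWord_eq_nil_iff.1 this

lemma common_suffix {β : Type*} {l l₁ l₂ s₁ s₂ : List β} {m : ℕ} (h : l = l₁ ++ s₁)
    (h' : l = l₂ ++ s₂) (hm : m ≤ s₁.length) (hm' : m ≤ s₂.length) :
    s₁.drop (s₁.length - m) = s₂.drop (s₂.length - m) := by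
  have key : ∀ (l₀ s : List β), l = l₀ ++ s → m ≤ s.length →
      s.drop (s.length - m) = l.drop (l.length - m) := by
    intro l₀ s hls hms
    rw [hls, show (l₀ ++ s).length - m = l₀.length + (s.length - m) from by
      simp; omega, ← List.drop_drop, List.drop_left]
  rw [key l₁ s₁ h hm, key l₂ s₂ h' hm']
section Enc
variable (B : ℕ) (dv : α × Bool → ℕ)

/-- base-`B` encoding of a word, used as secondary induction measure. -/
def enc : List (α × Bool) → ℕ
  | [] => 0
  | a :: l => dv a * B ^ l.length + enc l

lemma enc_lt (hB : ∀ a, dv a < B) : ∀ l : List (α × Bool), enc B dv l < B ^ l.length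
  | [] => by simp [enc]
  | a :: l => by
    have h1 := enc_lt hB l
    have h2 := hB a
    have hBpos : 1 ≤ B := by have := hB a; omega
    calc enc B dv (a :: l) = dv a * B ^ l.length + enc B dv l := rfl
      _ < dv a * B ^ l.length + B ^ l.length := by omega
      _ = (dv a + 1) * B ^ l.length := by ring
      _ ≤ B * B ^ l.length := Nat.mul_le_mul_right _ (by omega)
      _ = B ^ (a :: l).length := by rw [List.length_cons]; ring

lemma enc_append (l₁ l₂ : List (α × Bool)) :
    enc B dv (l₁ ++ l₂) = enc B dv l₁ * B ^ l₂.length + enc B dv l₂ := by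
  induction l₁ with
  | nil => simp [enc]
  | cons a l ih =>
    simp only [List.cons_append, enc, ih, List.length_append]
    ring

lemma enc_inj (hB : ∀ a, dv a < B) (hd : Function.Injective dv) :
    ∀ l₁ l₂ : List (α × Bool), l₁.length = l₂.length →
      enc B dv l₁ = enc B dv l₂ → l₁ = l₂ := by
  intro l₁
  induction l₁ with
  | nil => intro l₂ h _; cases l₂ <;> simp_all
  | cons a l ih =>
    intro l₂ hlen henc
    cases l₂ with
    | nil => simp at hlen
    | cons b m =>
      have hlm : l.length = m.length := by simpa using hlen
      have e1 := enc_lt B dv hB l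
      have e2 := enc_lt B dv hB m
      rw [hlm] at e1
      simp only [enc, hlm] at henc
      have hab : dv a = dv b := by
        rcases Nat.lt_trichotomy (dv a) (dv b) with h | h | h
        · exfalso
          have hp : 0 < B ^ m.length := Nat.pow_pos (by have := hB a; omega)
          nlinarith
        · exact h
        · exfalso
          have hp : 0 < B ^ m.length := Nat.pow_pos (by have := hB a; omega)
          nlinarith
      have : a = b := hd hab
      subst this
      have : enc B dv l = enc B dv m := by omega
      rw [ih m hlm this]

lemma enc_append_lt (hB : ∀ a, dv a < B) {p q z : List (α × Bool)}
    (hlen : p.length = q.length) (hpq : enc B dv p < enc B dv q) :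
    enc B dv (p ++ z) < enc B dv (q ++ z) := by
  rw [enc_append, enc_append]
  have hz := enc_lt B dv hB z
  have : enc B dv p + 1 ≤ enc B dv q := hpq
  nlinarith

end Enc
section Key
open FreeGroup

variable {n : ℕ}

lemma autExt {φ ψ : MulAut (FreeGroup (Fin n))}
    (h : ∀ a, φ (FreeGroup.of a) = ψ (FreeGroup.of a)) : φ = ψ := by
  have hh : φ.toMonoidHom = ψ.toMonoidHom := FreeGroup.ext_hom _ _ h
  exact MulEquiv.ext fun x => DFunLike.congr_fun hh x

/-- the generator-or-inverse associated to a signed letter -/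
def gen (t : Fin n × Bool) : FreeGroup (Fin n) := FreeGroup.mk [t]

lemma gen_eq (t : Fin n × Bool) :
    gen t = cond t.2 (FreeGroup.of t.1) (FreeGroup.of t.1)⁻¹ := by
  obtain ⟨i, b⟩ := t
  cases b
  · show FreeGroup.mk [(i, false)] = (FreeGroup.of i)⁻¹
    rw [show FreeGroup.of i = FreeGroup.mk [(i, true)] from rfl, FreeGroup.inv_mk]
    rfl
  · rfl

lemma toWord_gen (t : Fin n × Bool) : (gen t).toWord = [t] :=
  toWord_mk_of_nr (List.isChain_singleton t)

lemma gen_ne_one (t : Fin n × Bool) : gen t ≠ 1 := by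
  intro h
  have := congrArg FreeGroup.toWord h
  rw [toWord_gen, FreeGroup.toWord_one] at this
  simp at this

lemma gen_inv (t : Fin n × Bool) : (gen t)⁻¹ = gen (t.1, !t.2) := by
  rw [gen, FreeGroup.inv_mk, invRev_singleton]
  rfl

lemma inv_pair_symm {t s : Fin n × Bool} (h : t ≠ (s.1, !s.2)) : s ≠ (t.1, !t.2) := by
  intro hs
  apply h
  rw [hs]
  simp

lemma gen_mul_ne_one {t s : Fin n × Bool} (h : s ≠ (t.1, !t.2)) : gen t * gen s ≠ 1 := by
  intro hh
  have h1 : gen t = (gen s)⁻¹ := mul_eq_one_iff_eq_inv.1 hh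
  rw [gen_inv] at h1
  have h2 := congrArg FreeGroup.toWord h1
  rw [toWord_gen, toWord_gen] at h2
  have h3 : t = (s.1, !s.2) := List.head_eq_of_cons_eq h2
  apply h
  rw [h3]
  simp

/-- digit value of a signed letter -/
def dv : Fin n × Bool → ℕ := fun t => 2 * t.1.1 + cond t.2 1 0

lemma dv_lt (t : Fin n × Bool) : dv t < 2 * n := by
  have := t.1.2
  obtain ⟨i, b⟩ := t
  cases b <;> simp [dv] <;> omega

lemma dv_inj : Function.Injective (dv (n := n)) := by
  rintro ⟨i, b⟩ ⟨j, d⟩ h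
  simp only [dv] at h
  cases b <;> cases d <;> simp at h ⊢ <;> [skip; omega; omega; skip] <;>
    exact Fin.ext (by omega)

/-- secondary measure of a single word -/
def Sc (x : FreeGroup (Fin n)) : ℕ :=
  enc (2 * n) dv (x.toWord.take (FreeGroup.norm x / 2)) +
    enc (2 * n) dv ((x⁻¹).toWord.take (FreeGroup.norm x / 2))

lemma Sc_inv (x : FreeGroup (Fin n)) : Sc x⁻¹ = Sc x := by
  rw [Sc, Sc, inv_inv, FreeGroup.norm_inv_eq]
  exact Nat.add_comm _ _

def Lval (φ : MulAut (FreeGroup (Fin n))) : ℕ :=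
  ∑ i : Fin n, FreeGroup.norm (φ (FreeGroup.of i))

lemma Lval_def (φ : MulAut (FreeGroup (Fin n))) :
    Lval φ = ∑ i : Fin n, FreeGroup.norm (φ (FreeGroup.of i)) := rfl

lemma slot_eq {t s : Fin n × Bool} (h : s ≠ (t.1, !t.2)) (h1 : t.1 = s.1) : t = s := by
  obtain ⟨i, b⟩ := t; obtain ⟨j, d⟩ := s
  simp only at h1; subst h1
  cases b <;> cases d <;> first | rfl | (exfalso; exact h (by simp))

def Sval (φ : MulAut (FreeGroup (Fin n))) : ℕ :=
  ∑ i : Fin n, Sc (φ (FreeGroup.of i))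

lemma Sval_def (φ : MulAut (FreeGroup (Fin n))) :
    Sval φ = ∑ i : Fin n, Sc (φ (FreeGroup.of i)) := rfl

/-- a word with at least half self-cancellation is trivial -/
lemma self_cancel {x : FreeGroup (Fin n)} (h : FreeGroup.norm x ≤ 2 * cancelLen x x) :
    x = 1 := by
  obtain ⟨a, c, b, h1, h2, _, h4⟩ := exists_cancel x x
  have hc := cancel_spec h1 h2 h4
  refine self_overlap h1 h2 ?_
  rw [← norm_eq_len, hc]
  omega

end Key
section KeyMain
open FreeGroup

variable {n : ℕ}

theorem key (N : Subgroup (MulAut (FreeGroup (Fin n))))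
    (hMoveR : ∀ i j : Fin n, i ≠ j → ∀ d : Bool, ∃ m ∈ N, ∀ k,
      m (FreeGroup.of k) = if k = i then FreeGroup.of i * gen (j, d) else FreeGroup.of k)
    (hMoveL : ∀ i j : Fin n, i ≠ j → ∀ d : Bool, ∃ m ∈ N, ∀ k,
      m (FreeGroup.of k) = if k = i then gen (j, d) * FreeGroup.of i else FreeGroup.of k)
    (hBase : ∀ (g : Equiv.Perm (Fin n)) (sg : Fin n → Bool), ∃ ψ ∈ N, ∀ k,
      ψ (FreeGroup.of (g k)) = gen (k, sg k)) :
    ∀ φ : MulAut (FreeGroup (Fin n)), φ ∈ N := by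
  intro φ0
  suffices H : ∀ Lv Sv (φ : MulAut (FreeGroup (Fin n))), Lval φ = Lv → Sval φ = Sv → φ ∈ N by
    exact H _ _ φ0 rfl rfl
  intro Lv
  induction Lv using Nat.strong_induction_on with
  | _ Lv ihL =>
  intro Sv
  induction Sv using Nat.strong_induction_on with
  | _ Sv ihS =>
  intro φ hLv hSv
  -- basic facts about the images of the signed generators
  set u : Fin n × Bool → FreeGroup (Fin n) := fun t => φ (gen t) with hu
  have hu_of : ∀ i : Fin n, u (i, true) = φ (FreeGroup.of i) := fun i => by
    simp only [hu, gen_eq, cond]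
  have hu_inv : ∀ t : Fin n × Bool, u (t.1, !t.2) = (u t)⁻¹ := fun t => by
    simp only [hu]
    rw [← gen_inv, _root_.map_inv]
  have hu_ne : ∀ t, u t ≠ 1 := fun t h => gen_ne_one t (φ.injective (h.trans (_root_.map_one φ).symm))
  have hnorm_u : ∀ t : Fin n × Bool,
      FreeGroup.norm (u t) = FreeGroup.norm (φ (FreeGroup.of t.1)) := by
    rintro ⟨i, b⟩
    cases b
    · rw [show ((i, false) : Fin n × Bool) = ((i, true).1, !(i, true).2) from rfl, hu_inv,
        FreeGroup.norm_inv_eq, hu_of]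
    · rw [hu_of]
  have hSc_u : ∀ t : Fin n × Bool, Sc (u t) = Sc (φ (FreeGroup.of t.1)) := by
    rintro ⟨i, b⟩
    cases b
    · rw [show ((i, false) : Fin n × Bool) = ((i, true).1, !(i, true).2) from rfl, hu_inv,
        Sc_inv, hu_of]
    · rw [hu_of]
  have hu_mul_ne : ∀ t s : Fin n × Bool, s ≠ (t.1, !t.2) → u t * u s ≠ 1 := by
    intro t s hs h
    exact gen_mul_ne_one hs (φ.injective (by rwa [_root_.map_mul, _root_.map_one]))
  -- the two elementary replacement steps
  have hstepR : ∀ t s : Fin n × Bool, t.1 ≠ s.1 → ∃ φ' : MulAut (FreeGroup (Fin n)),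
      (φ' ∈ N → φ ∈ N) ∧ φ' (FreeGroup.of t.1) = cond t.2 (u t * u s) ((u t * u s)⁻¹) ∧
      ∀ k, k ≠ t.1 → φ' (FreeGroup.of k) = φ (FreeGroup.of k) := by
    rintro ⟨i, b⟩ s hne
    simp only at hne
    cases b
    · obtain ⟨m, hmN, hm⟩ := hMoveL i s.1 hne (!s.2)
      refine ⟨φ * m, fun h => ?_, ?_, fun k hk => ?_⟩
      · have he : φ = (φ * m) * m⁻¹ := by group
        rw [he]; exact N.mul_mem h (N.inv_mem hmN)
      · rw [MulAut.mul_apply, hm, if_pos rfl, _root_.map_mul]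
        have h1 : φ (gen (s.1, !s.2)) = (u s)⁻¹ := by rw [← hu_inv s]
        have h2 : φ (FreeGroup.of i) = (u ((i : Fin n), false))⁻¹ := by
          rw [show ((i, false) : Fin n × Bool) = ((i, true).1, !(i, true).2) from rfl, hu_inv,
            hu_of, inv_inv]
        rw [h1, h2, ← mul_inv_rev]
        rfl
      · rw [MulAut.mul_apply, hm, if_neg hk]
    · obtain ⟨m, hmN, hm⟩ := hMoveR i s.1 hne s.2
      refine ⟨φ * m, fun h => ?_, ?_, fun k hk => ?_⟩
      · have he : φ = (φ * m) * m⁻¹ := by group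
        rw [he]; exact N.mul_mem h (N.inv_mem hmN)
      · rw [MulAut.mul_apply, hm, if_pos rfl, _root_.map_mul]
        show φ (FreeGroup.of i) * u s = u (i, true) * u s
        rw [hu_of]
      · rw [MulAut.mul_apply, hm, if_neg hk]
  have hstepL : ∀ t s : Fin n × Bool, t.1 ≠ s.1 → ∃ φ' : MulAut (FreeGroup (Fin n)),
      (φ' ∈ N → φ ∈ N) ∧ φ' (FreeGroup.of t.1) = cond t.2 (u s * u t) ((u s * u t)⁻¹) ∧
      ∀ k, k ≠ t.1 → φ' (FreeGroup.of k) = φ (FreeGroup.of k) := by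
    rintro ⟨i, b⟩ s hne
    simp only at hne
    cases b
    · obtain ⟨m, hmN, hm⟩ := hMoveR i s.1 hne (!s.2)
      refine ⟨φ * m, fun h => ?_, ?_, fun k hk => ?_⟩
      · have he : φ = (φ * m) * m⁻¹ := by group
        rw [he]; exact N.mul_mem h (N.inv_mem hmN)
      · rw [MulAut.mul_apply, hm, if_pos rfl, _root_.map_mul]
        have h1 : φ (gen (s.1, !s.2)) = (u s)⁻¹ := by rw [← hu_inv s]
        have h2 : φ (FreeGroup.of i) = (u ((i : Fin n), false))⁻¹ := by
          rw [show ((i, false) : Fin n × Bool) = ((i, true).1, !(i, true).2) from rfl, hu_inv,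
            hu_of, inv_inv]
        rw [h1, h2, ← mul_inv_rev]
        rfl
      · rw [MulAut.mul_apply, hm, if_neg hk]
    · obtain ⟨m, hmN, hm⟩ := hMoveL i s.1 hne s.2
      refine ⟨φ * m, fun h => ?_, ?_, fun k hk => ?_⟩
      · have he : φ = (φ * m) * m⁻¹ := by group
        rw [he]; exact N.mul_mem h (N.inv_mem hmN)
      · rw [MulAut.mul_apply, hm, if_pos rfl, _root_.map_mul]
        show u s * φ (FreeGroup.of i) = u s * u (i, true)
        rw [hu_of]
      · rw [MulAut.mul_apply, hm, if_neg hk]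
  by_cases C1 : ∃ t s : Fin n × Bool, t.1 ≠ s.1 ∧
      FreeGroup.norm (u t * u s) < FreeGroup.norm (u t)
  · obtain ⟨t, s, hne, hlt⟩ := C1
    obtain ⟨φ', himp, hval, hoth⟩ := hstepR t s hne
    apply himp
    have hnormval : FreeGroup.norm (φ' (FreeGroup.of t.1)) = FreeGroup.norm (u t * u s) := by
      rw [hval]; cases ht : t.2
      · exact FreeGroup.norm_inv_eq
      · rfl
    have hLlt : Lval φ' < Lval φ := by
      rw [Lval_def, Lval_def]
      apply Finset.sum_lt_sum
      · intro k _
        by_cases hk : k = t.1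
        · subst hk; rw [hnormval, ← hnorm_u t]; exact le_of_lt hlt
        · rw [hoth k hk]
      · exact ⟨t.1, Finset.mem_univ _, by rw [hnormval, ← hnorm_u t]; exact hlt⟩
    exact ihL (Lval φ') (hLv ▸ hLlt) (Sval φ') φ' rfl rfl
  · push_neg at C1
    -- N1 bounds
    have hN1 : ∀ t s : Fin n × Bool, t.1 ≠ s.1 →
        FreeGroup.norm (u t) ≤ FreeGroup.norm (u t * u s) := C1
    have hN1' : ∀ t s : Fin n × Bool, t.1 ≠ s.1 →
        FreeGroup.norm (u s) ≤ FreeGroup.norm (u t * u s) := by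
      intro t s hne
      have h1 := hN1 (s.1, !s.2) (t.1, !t.2) (by simpa using hne.symm)
      rw [hu_inv, hu_inv, ← mul_inv_rev, FreeGroup.norm_inv_eq, FreeGroup.norm_inv_eq] at h1
      exact h1
    -- half-cancellation bounds
    have hC2 : ∀ t s : Fin n × Bool, s ≠ (t.1, !t.2) →
        2 * cancelLen (u t) (u s) ≤ FreeGroup.norm (u s) ∧
        2 * cancelLen (u t) (u s) ≤ FreeGroup.norm (u t) := by
      intro t s hs
      by_cases hts : t.1 = s.1
      · have hteq : t = s := by
          obtain ⟨i, b⟩ := t; obtain ⟨j, d⟩ := s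
          simp only at hts
          subst hts
          cases b <;> cases d <;> first | rfl | (exfalso; exact hs (by simp))
        subst hteq
        have hh : 2 * cancelLen (u t) (u t) ≤ FreeGroup.norm (u t) := by
          by_contra hcon
          push_neg at hcon
          exact hu_ne t (self_cancel (le_of_lt hcon))
        exact ⟨hh, hh⟩
      · obtain ⟨a, c, b, h1, h2, _, h4⟩ := exists_cancel (u t) (u s)
        have hc := cancel_spec h1 h2 h4
        have e1 : FreeGroup.norm (u t) = a.length + c.length := by
          rw [norm_eq_len, h1, List.length_append]
        have e2 : FreeGroup.norm (u s) = c.length + b.length := by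
          rw [norm_eq_len, h2, List.length_append, FreeGroup.invRev_length]
        have e3 : FreeGroup.norm (u t * u s) = a.length + b.length := by
          rw [norm_eq_len, h4, List.length_append]
        have b1 := hN1 t s hts
        have b2 := hN1' t s hts
        omega
    by_cases C2 : ∃ t1 t2 t3 : Fin n × Bool, t2 ≠ (t1.1, !t1.2) ∧ t3 ≠ (t2.1, !t2.2) ∧
        FreeGroup.norm (u t2) ≤ cancelLen (u t1) (u t2) + cancelLen (u t2) (u t3)
    · obtain ⟨t1, t2, t3, ht1, ht3, hsum⟩ := C2
      have hvne := hu_ne t2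
      have hc1a := hC2 t1 t2 ht1
      have hc2a := hC2 t2 t3 ht3
      have hnv1 : FreeGroup.norm (u t2) ≠ 0 := fun h => hvne (FreeGroup.norm_eq_zero.1 h)
      -- exact half cancellation on both sides
      have h2c1 : 2 * cancelLen (u t1) (u t2) = FreeGroup.norm (u t2) := by omega
      have h2c2 : 2 * cancelLen (u t2) (u t3) = FreeGroup.norm (u t2) := by omega
      have hc1pos : 1 ≤ cancelLen (u t1) (u t2) := by omega
      have hc1c2 : cancelLen (u t1) (u t2) = cancelLen (u t2) (u t3) := by omega
      have ht12 : t1.1 ≠ t2.1 := by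
        intro h
        have hteq : t1 = t2 := slot_eq ht1 h
        rw [hteq] at h2c1
        exact hvne (self_cancel (by omega))
      have ht32 : t3.1 ≠ t2.1 := by
        intro h
        have hteq : t2 = t3 := slot_eq ht3 h.symm
        rw [← hteq] at h2c2
        exact hvne (self_cancel (by omega))
      -- decompositions
      obtain ⟨a1, cc1, b1, e11, e12, e13, e14⟩ := exists_cancel (u t1) (u t2)
      have hcc1 : cc1.length = cancelLen (u t1) (u t2) := cancel_spec e11 e12 e14
      obtain ⟨a2, cc2, b2, f1, f2, f3, f4⟩ := exists_cancel (u t2) (u t3)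
      have hcc2 : cc2.length = cancelLen (u t2) (u t3) := cancel_spec f1 f2 f4
      have hlv : FreeGroup.norm (u t2) = cc1.length + b1.length := by
        rw [norm_eq_len, e12, List.length_append, FreeGroup.invRev_length]
      have hlv2 : FreeGroup.norm (u t2) = a2.length + cc2.length := by
        rw [norm_eq_len, f1, List.length_append]
      have hla2 : a2.length = cc1.length := by omega
      have hlb1 : b1.length = cc1.length := by omega
      have hicc1 : (FreeGroup.invRev cc1).length = cc1.length := FreeGroup.invRev_length
      -- identify the two halves of u t2
      have hpa2 : a2 = FreeGroup.invRev cc1 := by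
        have h1 : a2 = (u t2).toWord.take a2.length := by rw [f1, List.take_left]
        have h2 : FreeGroup.invRev cc1 = (u t2).toWord.take a2.length := by
          rw [e12, ← show (FreeGroup.invRev cc1).length = a2.length by rw [hicc1, hla2],
            List.take_left]
        rw [h1, h2]
      have hqb1 : b1 = cc2 := by
        have h1 : b1 = (u t2).toWord.drop a2.length := by
          rw [e12, ← show (FreeGroup.invRev cc1).length = a2.length by rw [hicc1, hla2]]
          rw [List.drop_left]
        have h2 : cc2 = (u t2).toWord.drop a2.length := by rw [f1, List.drop_left]
        rw [h1, h2]
      have hpq : FreeGroup.invRev cc1 ≠ FreeGroup.invRev cc2 := by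
        intro h
        have hw : (u t2).toWord = FreeGroup.invRev cc2 ++ cc2 := by
          rw [e12, hqb1, h]
        have h0 := nr_invRev_append_self (by rw [← hw]; exact nr_toWord (u t2))
        rw [h0] at hcc2
        simp at hcc2
        omega
      have hlenpq : (FreeGroup.invRev cc1).length = (FreeGroup.invRev cc2).length := by
        rw [FreeGroup.invRev_length, FreeGroup.invRev_length, hcc1, hcc2, hc1c2]
      have henc_ne : enc (2 * n) dv (FreeGroup.invRev cc1) ≠
          enc (2 * n) dv (FreeGroup.invRev cc2) := fun h =>
        hpq (enc_inj _ _ dv_lt dv_inj _ _ hlenpq h)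
      -- helper for updating the sums
      have hupd : ∀ (φ' : MulAut (FreeGroup (Fin n))) (t : Fin n × Bool) (X : FreeGroup (Fin n)),
          φ' (FreeGroup.of t.1) = cond t.2 X X⁻¹ →
          (∀ k, k ≠ t.1 → φ' (FreeGroup.of k) = φ (FreeGroup.of k)) →
          FreeGroup.norm X = FreeGroup.norm (u t) → Sc X < Sc (u t) →
          (Lval φ' = Lval φ ∧ Sval φ' < Sval φ) := by
        intro φ' t X hval hoth hnX hSX
        have hnval : FreeGroup.norm (φ' (FreeGroup.of t.1)) = FreeGroup.norm X := by
          rw [hval]; cases t.2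
          · exact FreeGroup.norm_inv_eq
          · rfl
        have hsval : Sc (φ' (FreeGroup.of t.1)) = Sc X := by
          rw [hval]; cases t.2
          · exact Sc_inv X
          · rfl
        constructor
        · rw [Lval_def, Lval_def]
          refine Finset.sum_congr rfl (fun k _ => ?_)
          by_cases hk : k = t.1
          · subst hk; rw [hnval, hnX, hnorm_u]
          · rw [hoth k hk]
        · rw [Sval_def, Sval_def]
          apply Finset.sum_lt_sum
          · intro k _
            by_cases hk : k = t.1
            · subst hk; rw [hsval, ← hSc_u t]; exact le_of_lt hSX
            · rw [hoth k hk]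
          · exact ⟨t.1, Finset.mem_univ _, by rw [hsval, ← hSc_u t]; exact hSX⟩
      rcases lt_or_gt_of_ne henc_ne.symm with hcase | hcase
      · -- replace u t1 by u t1 * u t2
        obtain ⟨φ', himp, hval, hoth⟩ := hstepR t1 t2 ht12
        apply himp
        have l1 : FreeGroup.norm (u t1) = a1.length + cc1.length := by
          rw [norm_eq_len, e11, List.length_append]
        have l2 : FreeGroup.norm (u t1 * u t2) = a1.length + b1.length := by
          rw [norm_eq_len, e14, List.length_append]
        have hnX : FreeGroup.norm (u t1 * u t2) = FreeGroup.norm (u t1) := by omega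
        have hc1M : 2 * cc1.length ≤ FreeGroup.norm (u t1) := by omega
        have hSclt : Sc (u t1 * u t2) < Sc (u t1) := by
          set M := FreeGroup.norm (u t1) with hM
          have hhalf : cc1.length ≤ M / 2 := by omega
          have hhalfa : M / 2 ≤ a1.length := by omega
          rw [Sc, Sc, hnX, ← hM]
          have hw1 : (u t1 * u t2).toWord = a1 ++ b1 := e14
          have hw2 : (u t1).toWord = a1 ++ cc1 := e11
          have hiw1 : ((u t1 * u t2)⁻¹).toWord = FreeGroup.invRev b1 ++ FreeGroup.invRev a1 := by
            rw [FreeGroup.toWord_inv, hw1, invRev_append]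
          have hiw2 : ((u t1)⁻¹).toWord = FreeGroup.invRev cc1 ++ FreeGroup.invRev a1 := by
            rw [FreeGroup.toWord_inv, hw2, invRev_append]
          have hfirst : (a1 ++ b1).take (M / 2) = (a1 ++ cc1).take (M / 2) := by
            rw [List.take_append_of_le_length hhalfa, List.take_append_of_le_length hhalfa]
          have htk : ∀ z : List (Fin n × Bool), z.length = cc1.length →
              (z ++ FreeGroup.invRev a1).take (M / 2) =
                z ++ (FreeGroup.invRev a1).take (M / 2 - cc1.length) := by
            intro z hz
            rw [List.take_append, List.take_of_length_le (by omega), hz]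
          have hsecond : enc (2 * n) dv (((u t1 * u t2)⁻¹).toWord.take (M / 2)) <
              enc (2 * n) dv (((u t1)⁻¹).toWord.take (M / 2)) := by
            rw [hiw1, hiw2, htk _ (by rw [FreeGroup.invRev_length, hlb1]),
              htk _ hicc1]
            refine enc_append_lt _ _ dv_lt ?_ ?_
            · rw [FreeGroup.invRev_length, FreeGroup.invRev_length]; exact hlb1
            · rw [hqb1]; exact hcase
          rw [hw1, hw2, hfirst]
          exact Nat.add_lt_add_left hsecond _
        obtain ⟨hL, hS⟩ := hupd φ' t1 (u t1 * u t2) hval hoth hnX hSclt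
        exact ihS (Sval φ') (hSv ▸ hS) φ' (hL.trans hLv) rfl
      · -- replace u t3 by u t2 * u t3
        obtain ⟨φ', himp, hval, hoth⟩ := hstepL t3 t2 ht32
        apply himp
        have l1 : FreeGroup.norm (u t3) = cc2.length + b2.length := by
          rw [norm_eq_len, f2, List.length_append, FreeGroup.invRev_length]
        have l2 : FreeGroup.norm (u t2 * u t3) = a2.length + b2.length := by
          rw [norm_eq_len, f4, List.length_append]
        have hnX : FreeGroup.norm (u t2 * u t3) = FreeGroup.norm (u t3) := by omega
        have hc2M : 2 * cc2.length ≤ FreeGroup.norm (u t3) := by omega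
        have hSclt : Sc (u t2 * u t3) < Sc (u t3) := by
          set M := FreeGroup.norm (u t3) with hM
          have hhalf : cc2.length ≤ M / 2 := by omega
          have hhalfb : M / 2 ≤ b2.length := by omega
          rw [Sc, Sc, hnX, ← hM]
          have hw1 : (u t2 * u t3).toWord = a2 ++ b2 := f4
          have hw2 : (u t3).toWord = FreeGroup.invRev cc2 ++ b2 := f2
          have hiw1 : ((u t2 * u t3)⁻¹).toWord = FreeGroup.invRev b2 ++ FreeGroup.invRev a2 := by
            rw [FreeGroup.toWord_inv, hw1, invRev_append]
          have hiw2 : ((u t3)⁻¹).toWord = FreeGroup.invRev b2 ++ cc2 := by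
            rw [FreeGroup.toWord_inv, hw2, invRev_append, FreeGroup.invRev_invRev]
          have htk : ∀ z : List (Fin n × Bool), z.length = cc2.length →
              (z ++ b2).take (M / 2) = z ++ b2.take (M / 2 - cc2.length) := by
            intro z hz
            rw [List.take_append, List.take_of_length_le (by omega), hz]
          have hfirst : enc (2 * n) dv ((u t2 * u t3).toWord.take (M / 2)) <
              enc (2 * n) dv ((u t3).toWord.take (M / 2)) := by
            rw [hw1, hw2, htk _ (by rw [hla2, hcc1, hc1c2, ← hcc2]),
              htk _ (FreeGroup.invRev_length)]
            refine enc_append_lt _ _ dv_lt ?_ ?_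
            · rw [hpa2, hlenpq]
            · rw [hpa2]; exact hcase
          have hsecond : (((u t2 * u t3)⁻¹).toWord.take (M / 2)) =
              (((u t3)⁻¹).toWord.take (M / 2)) := by
            rw [hiw1, hiw2, List.take_append_of_le_length
                (by rw [FreeGroup.invRev_length]; omega),
              List.take_append_of_le_length (by rw [FreeGroup.invRev_length]; omega)]
          rw [hsecond]
          exact Nat.add_lt_add_right hfirst _
        obtain ⟨hL, hS⟩ := hupd φ' t3 (u t2 * u t3) hval hoth hnX hSclt
        exact ihS (Sval φ') (hSv ▸ hS) φ' (hL.trans hLv) rfl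

    · push_neg at C2
      -- maximal possible cancellations on each side
      set Lc : (Fin n × Bool) → ℕ := fun t =>
        (Finset.univ.filter (fun s : Fin n × Bool => s ≠ (t.1, !t.2))).sup
          (fun s => cancelLen (u s) (u t)) with hLcdef
      set Rc : (Fin n × Bool) → ℕ := fun t =>
        (Finset.univ.filter (fun s : Fin n × Bool => s ≠ (t.1, !t.2))).sup
          (fun s => cancelLen (u t) (u s)) with hRcdef
      have hfilter_ne : ∀ t : Fin n × Bool,
          (Finset.univ.filter (fun s : Fin n × Bool => s ≠ (t.1, !t.2))).Nonempty := fun t =>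
        ⟨t, Finset.mem_filter.2 ⟨Finset.mem_univ _, fun h => by
          have h2 : t.2 = !t.2 := congrArg Prod.snd h
          simp at h2⟩⟩
      have hLR : ∀ t, Lc t + Rc t < FreeGroup.norm (u t) := by
        intro t
        obtain ⟨s1, hs1mem, hs1⟩ :=
          Finset.exists_mem_eq_sup _ (hfilter_ne t) (fun s => cancelLen (u s) (u t))
        obtain ⟨s3, hs3mem, hs3⟩ :=
          Finset.exists_mem_eq_sup _ (hfilter_ne t) (fun s => cancelLen (u t) (u s))
        have hm1 := (Finset.mem_filter.1 hs1mem).2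
        have hm3 := (Finset.mem_filter.1 hs3mem).2
        have hlt := C2 s1 t s3 (inv_pair_symm hm1) hm3
        calc Lc t + Rc t = cancelLen (u s1) (u t) + cancelLen (u t) (u s3) := by
              rw [hLcdef, hRcdef, ← hs1, ← hs3]
          _ < FreeGroup.norm (u t) := hlt
      -- main estimate for products of the generators' images
      have hD : ∀ (s₀ : List (Fin n × Bool)) (t : Fin n × Bool), NR (s₀ ++ [t]) →
          ∃ (k : ℕ) (A : List (Fin n × Bool)), k ≤ Lc t ∧
            (φ (FreeGroup.mk (s₀ ++ [t]))).toWord = A ++ ((u t).toWord).drop k ∧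
            s₀.length + 1 + Rc t ≤ FreeGroup.norm (φ (FreeGroup.mk (s₀ ++ [t]))) := by
        intro s₀
        induction s₀ using List.reverseRecOn with
        | nil =>
          intro t _
          refine ⟨0, [], Nat.zero_le _, ?_, ?_⟩
          · rw [List.nil_append, List.drop_zero, List.nil_append]
            rfl
          · have := hLR t
            rw [List.nil_append]
            show 0 + 1 + Rc t ≤ FreeGroup.norm (u t)
            omega
        | append_singleton s₁ t' ih =>
          intro t hnr
          have hpre : NR (s₁ ++ [t']) := hnr.prefix ⟨[t], by simp⟩
          obtain ⟨k', A', hk', heq', hnorm'⟩ := ih t' hpre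
          have hadj : t ≠ (t'.1, !t'.2) := by
            obtain ⟨_, _, hrel⟩ := List.isChain_append.1 hnr
            intro he
            refine hrel t' (by simp) t (by simp) ⟨(congrArg Prod.fst he).symm, ?_⟩
            have h2 := congrArg Prod.snd he
            simp at h2
            simp [h2]
          set x := φ (FreeGroup.mk (s₁ ++ [t'])) with hx
          have hxy : φ (FreeGroup.mk ((s₁ ++ [t']) ++ [t])) = x * u t := by
            rw [← FreeGroup.mul_mk, _root_.map_mul]
            rfl
          obtain ⟨a, cc, b, h1, h2, h3, h4⟩ := exists_cancel x (u t)
          obtain ⟨a2, c2, b2, g1, g2, g3, g4⟩ := exists_cancel (u t') (u t)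
          have hcLen : c2.length = cancelLen (u t') (u t) := cancel_spec g1 g2 g4
          have hc2Rc : cancelLen (u t') (u t) ≤ Rc t' :=
            Finset.le_sup (f := fun s => cancelLen (u t') (u s))
              (Finset.mem_filter.2 ⟨Finset.mem_univ _, hadj⟩)
          have hc2Lc : cancelLen (u t') (u t) ≤ Lc t :=
            Finset.le_sup (f := fun s => cancelLen (u s) (u t))
              (Finset.mem_filter.2 ⟨Finset.mem_univ _, inv_pair_symm hadj⟩)
          have hccle : cc.length ≤ c2.length := by
            by_contra hlt
            push_neg at hlt
            set m := c2.length + 1 with hm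
            set D := (u t').toWord.drop k' with hD'
            have hD'len : D.length = FreeGroup.norm (u t') - k' := by
              rw [hD', List.length_drop, norm_eq_len]
            have hmD : m ≤ D.length := by
              have := hLR t'
              omega
            have hmcc : m ≤ cc.length := by omega
            -- the common suffix of length m of the two decompositions of x
            have hsfx : cc.drop (cc.length - m) = D.drop (D.length - m) :=
              common_suffix h1 heq' hmcc hmD
            -- as a suffix of (u t').toWord
            have h9 : m ≤ FreeGroup.norm (u t') - k' := by rw [← hD'len]; exact hmD
            have hDsplit : D.drop (D.length - m) = (u t').toWord.drop
                (FreeGroup.norm (u t') - m) := by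
              rw [hD', List.drop_drop]
              congr 1
              rw [List.length_drop, ← norm_eq_len]
              omega
            have hsmlen : (cc.drop (cc.length - m)).length = m := by
              rw [List.length_drop]; omega
            have hxw' : (u t').toWord = (u t').toWord.take (FreeGroup.norm (u t') - m)
                ++ cc.drop (cc.length - m) := by
              rw [hsfx, hDsplit, List.take_append_drop]
            have hinvcc : FreeGroup.invRev cc =
                FreeGroup.invRev (cc.drop (cc.length - m)) ++
                  FreeGroup.invRev (cc.take (cc.length - m)) := by
              rw [← invRev_append, List.take_append_drop]
            have hyw' : (u t).toWord = FreeGroup.invRev (cc.drop (cc.length - m)) ++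
                (FreeGroup.invRev (cc.take (cc.length - m)) ++ b) := by
              rw [h2, hinvcc, List.append_assoc]
            have hfin := cancel_max g1 g2 g3 hxw' hyw'
            rw [hsmlen] at hfin
            omega
          refine ⟨cc.length, a, by omega, ?_, ?_⟩
          · rw [hxy, h4]
            congr 1
            rw [h2, ← show (FreeGroup.invRev cc).length = cc.length from
              FreeGroup.invRev_length, List.drop_left]
          · have l1 : FreeGroup.norm x = a.length + cc.length := by
              rw [norm_eq_len, h1, List.length_append]
            have l2 : FreeGroup.norm (u t) = cc.length + b.length := by
              rw [norm_eq_len, h2, List.length_append, FreeGroup.invRev_length]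
            have l3 : FreeGroup.norm (x * u t) = a.length + b.length := by
              rw [norm_eq_len, h4, List.length_append]
            have hLRt := hLR t
            rw [hxy]
            simp only [List.length_append, List.length_singleton]
            omega
      -- every generator of the free group is (up to sign) one of the images
      have hletter : ∀ i : Fin n, ∃ t : Fin n × Bool, u t = FreeGroup.of i := by
        intro i
        set z := φ⁻¹ (FreeGroup.of i) with hz
        have hφz : φ z = FreeGroup.of i := by
          rw [hz, ← MulAut.mul_apply, mul_inv_cancel, MulAut.one_apply]
        have hz1 : z ≠ 1 := by
          intro h
          rw [h, _root_.map_one] at hφz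
          exact FreeGroup.of_ne_one i hφz.symm
        have hznil : z.toWord ≠ [] := fun h => hz1 (FreeGroup.toWord_eq_nil_iff.1 h)
        obtain ⟨s₀, t, hcat⟩ := List.eq_nil_or_concat z.toWord |>.resolve_left hznil
        simp only [List.concat_eq_append] at hcat
        have hnr : NR (s₀ ++ [t]) := hcat ▸ nr_toWord z
        obtain ⟨k, A, hk, heq, hbound⟩ := hD s₀ t hnr
        have hmkz : FreeGroup.mk (s₀ ++ [t]) = z := by rw [← hcat, FreeGroup.mk_toWord]
        rw [hmkz] at hbound
        have hone : FreeGroup.norm (φ z) = 1 := by rw [hφz]; exact FreeGroup.norm_of i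
        have hs0 : s₀.length = 0 := by omega
        have hs0nil : s₀ = [] := List.length_eq_zero_iff.1 hs0
        refine ⟨t, ?_⟩
        rw [hs0nil, List.nil_append] at hmkz
        show φ (gen t) = FreeGroup.of i
        rw [show gen t = FreeGroup.mk [t] from rfl, hmkz, hφz]
      -- build the permutation and conclude
      choose tt htt using hletter
      have hinj : Function.Injective (fun i => (tt i).1) := by
        intro i j hij
        simp only at hij
        by_cases hb : (tt i).2 = (tt j).2
        · have he : tt i = tt j := Prod.ext hij hb
          exact FreeGroup.of_injective ((htt i).symm.trans (he ▸ htt j))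
        · exfalso
          have h1 : tt i = ((tt j).1, !(tt j).2) := by
            have hbne : (tt i).2 = !(tt j).2 := by
              cases hbi : (tt i).2 <;> cases hbj : (tt j).2 <;>
                first | rfl | (exfalso; exact hb (hbi.trans hbj.symm))
            exact Prod.ext hij hbne
          have h2 : u (tt i) = (u (tt j))⁻¹ := by rw [h1, hu_inv]
          rw [htt i, htt j] at h2
          have h3 := congrArg FreeGroup.toWord h2
          rw [FreeGroup.toWord_of, FreeGroup.toWord_inv, FreeGroup.toWord_of] at h3
          simp [FreeGroup.invRev] at h3
      have hbij := Finite.injective_iff_bijective.1 hinj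
      obtain ⟨ψ, hψN, hψ⟩ := hBase (Equiv.ofBijective _ hbij) (fun i => (tt i).2)
      have hφψ : φ = ψ := by
        apply autExt
        intro m
        set g := Equiv.ofBijective _ hbij with hg
        have hm : m = g (g.symm m) := (g.apply_symm_apply m).symm
        set i := g.symm m with hi
        rw [hm, hψ i]
        have hgi : g i = (tt i).1 := rfl
        rw [hgi]
        have h1 : u (tt i) = FreeGroup.of i := htt i
        rcases hb : (tt i) with ⟨c, d⟩
        rw [hb] at h1
        cases d
        · have h2 : u (c, false) = (φ (FreeGroup.of c))⁻¹ := by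
            rw [show ((c, false) : Fin n × Bool) = ((c, true).1, !(c, true).2) from rfl,
              hu_inv, hu_of]
          rw [h2] at h1
          have h3 : φ (FreeGroup.of c) = (FreeGroup.of i)⁻¹ := by
            rw [← h1, inv_inv]
          rw [h3, gen_eq]
          rfl
        · rw [hu_of] at h1
          rw [h1, gen_eq]
          rfl
      rw [hφψ]
      exact hψN

end KeyMain
section Inst
open FreeGroup Equiv

variable {n : ℕ}

def permAut (π : Equiv.Perm (Fin n)) : MulAut (FreeGroup (Fin n)) :=
  FreeGroup.freeGroupCongr π

lemma permAut_of (π : Equiv.Perm (Fin n)) (a : Fin n) :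
    permAut π (FreeGroup.of a) = FreeGroup.of (π a) := by
  show FreeGroup.freeGroupCongr π (FreeGroup.of a) = _
  rw [FreeGroup.freeGroupCongr_apply, FreeGroup.map.of]

lemma permAut_mul (π π' : Equiv.Perm (Fin n)) :
    permAut (π * π') = permAut π * permAut π' := by
  apply autExt
  intro a
  rw [MulAut.mul_apply, permAut_of, permAut_of, permAut_of]
  rfl

lemma permAut_one : permAut (1 : Equiv.Perm (Fin n)) = 1 := by
  apply autExt
  intro a
  rw [permAut_of, MulAut.one_apply]
  rfl

lemma permAut_inv (π : Equiv.Perm (Fin n)) : permAut π⁻¹ = (permAut π)⁻¹ := by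
  rw [eq_inv_iff_mul_eq_one, ← permAut_mul, inv_mul_cancel, permAut_one]

lemma exists_perm01 {m : ℕ} (i j : Fin (m + 3)) (hij : i ≠ j) :
    ∃ π : Equiv.Perm (Fin (m + 3)), π 0 = i ∧ π 1 = j := by
  have h01 : (0 : Fin (m + 3)) ≠ 1 := by
    intro h
    have := congrArg Fin.val h
    simp [Fin.val_zero, Fin.val_one] at this
  set π₁ := Equiv.swap (0 : Fin (m + 3)) i with hπ₁
  have hπ₁0 : π₁ 0 = i := swap_apply_left 0 i
  set j' := π₁ j with hj'
  have hπ₁j' : π₁ j' = j := by rw [hj', hπ₁]; exact swap_apply_self 0 i j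
  have hj'0 : j' ≠ 0 := by
    intro h
    rw [h] at hπ₁j'
    exact hij (hπ₁0.symm.trans hπ₁j') |>.elim
  by_cases hj1 : j' = 1
  · exact ⟨π₁, hπ₁0, by rw [← hj1]; exact hπ₁j'⟩
  · refine ⟨π₁ * Equiv.swap 1 j', ?_, ?_⟩
    · rw [Equiv.Perm.mul_apply, swap_apply_of_ne_of_ne h01 (Ne.symm hj'0)]
      exact hπ₁0
    · rw [Equiv.Perm.mul_apply, swap_apply_left]
      exact hπ₁j'

end Inst
end NielsenAux
open NielsenAux in
/-- For `n ≥ 3`, `Aut(F_n)` is generated by the four automorphisms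
`ρ₁₂ : x₁ ↦ x₁x₂`, `e₁ : x₁ ↦ x₁⁻¹`, the transposition `(x₁,x₂)`, and the cyclic
permutation `(x₁,x₂,…,x_n)` of the basis (indices mod `n`). -/
theorem aut_generated_by_four {n : ℕ} (hn : 3 ≤ n)
    (ρ e τ σ : MulAut (FreeGroup (Fin n)))
    (hρ : ∀ k : Fin n, ρ (FreeGroup.of k) =
      if k = ⟨0, by omega⟩ then
        FreeGroup.of (⟨0, by omega⟩ : Fin n) * FreeGroup.of (⟨1, by omega⟩ : Fin n)
      else FreeGroup.of k)
    (he : ∀ k : Fin n, e (FreeGroup.of k) =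
      if k = ⟨0, by omega⟩ then (FreeGroup.of (⟨0, by omega⟩ : Fin n))⁻¹ else FreeGroup.of k)
    (hτ : ∀ k : Fin n, τ (FreeGroup.of k) =
      if k = ⟨0, by omega⟩ then FreeGroup.of (⟨1, by omega⟩ : Fin n)
      else if k = ⟨1, by omega⟩ then FreeGroup.of (⟨0, by omega⟩ : Fin n)
      else FreeGroup.of k)
    (hσ : ∀ k : Fin n, σ (FreeGroup.of k) = FreeGroup.of (k + ⟨1, by omega⟩)) :
    Subgroup.closure {ρ, e, τ, σ} = (⊤ : Subgroup (MulAut (FreeGroup (Fin n)))) := by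
  obtain ⟨m, rfl⟩ : ∃ m, n = m + 3 := ⟨n - 3, by omega⟩
  rw [eq_top_iff]
  intro φ _
  set N := Subgroup.closure {ρ, e, τ, σ} with hN
  have h0 : (⟨0, by omega⟩ : Fin (m + 3)) = 0 := by ext; simp
  have h1 : (⟨1, by omega⟩ : Fin (m + 3)) = 1 := by ext; simp [Fin.val_one]
  have h10 : (1 : Fin (m + 3)) ≠ 0 := by
    intro h
    have := congrArg Fin.val h
    simp [Fin.val_one] at this
  simp only [h0, h1] at hρ he hτ hσ
  have hρN : ρ ∈ N := Subgroup.subset_closure (by simp)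
  have heN : e ∈ N := Subgroup.subset_closure (by simp)
  have hτN : τ ∈ N := Subgroup.subset_closure (by simp)
  have hσN : σ ∈ N := Subgroup.subset_closure (by simp)
  -- the permutation automorphisms all belong to N
  have hσP : permAut (finRotate (m + 3)) = σ := by
    apply autExt
    intro k
    rw [permAut_of, hσ k, finRotate_succ_apply]
  have hτP : permAut (Equiv.swap 0 1) = τ := by
    apply autExt
    intro k
    rw [permAut_of, hτ k]
    by_cases hk0 : k = 0
    · subst hk0
      rw [if_pos rfl, Equiv.swap_apply_left]
    · by_cases hk1 : k = 1
      · subst hk1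
        rw [if_neg h10, if_pos rfl, Equiv.swap_apply_right]
      · rw [if_neg hk0, if_neg hk1, Equiv.swap_apply_of_ne_of_ne hk0 hk1]
  have hPerm : ∀ π : Equiv.Perm (Fin (m + 3)), permAut π ∈ N := by
    intro π
    have hST : Equiv.Perm.support (finRotate (m + 3)) = Finset.univ :=
      support_finRotate_of_le (by omega)
    have hcl := Equiv.Perm.closure_cycle_adjacent_swap
      (isCycle_finRotate_of_le (by omega)) hST 0
    have hπ : π ∈ Subgroup.closure
        {finRotate (m + 3), Equiv.swap 0 (finRotate (m + 3) 0)} := by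
      rw [hcl]; exact Subgroup.mem_top π
    refine Subgroup.closure_induction ?_ ?_ ?_ ?_ hπ
    · intro x hx
      simp only [Set.mem_insert_iff, Set.mem_singleton_iff] at hx
      rcases hx with rfl | rfl
      · rw [hσP]; exact hσN
      · rw [show finRotate (m + 3) 0 = 1 from finRotate_apply_zero, hτP]
        exact hτN
    · rw [permAut_one]; exact N.one_mem
    · intro x y _ _ hx hy
      rw [permAut_mul]; exact N.mul_mem hx hy
    · intro x _ hx
      rw [permAut_inv]; exact N.inv_mem hx
  -- the coordinate inversions
  have hEi : ∀ i : Fin (m + 3), ∃ E ∈ N, ∀ k,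
      E (FreeGroup.of k) = if k = i then (FreeGroup.of i)⁻¹ else FreeGroup.of k := by
    intro i
    refine ⟨permAut (Equiv.swap 0 i) * e * permAut (Equiv.swap 0 i),
      N.mul_mem (N.mul_mem (hPerm _) heN) (hPerm _), fun k => ?_⟩
    rw [MulAut.mul_apply, MulAut.mul_apply, permAut_of]
    by_cases hk : k = i
    · subst hk
      rw [if_pos rfl, Equiv.swap_apply_right, he 0, if_pos rfl, _root_.map_inv,
        permAut_of, Equiv.swap_apply_left]
    · rw [if_neg hk]
      by_cases hk0 : k = 0
      · subst hk0
        rw [Equiv.swap_apply_left, he i, if_neg (fun h => hk h.symm), permAut_of,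
          Equiv.swap_apply_right]
      · rw [Equiv.swap_apply_of_ne_of_ne hk0 hk, he k, if_neg hk0, permAut_of,
          Equiv.swap_apply_of_ne_of_ne hk0 hk]
  -- the basic right multiplication
  have hR0 : ∀ i j : Fin (m + 3), i ≠ j → ∃ R ∈ N, ∀ k,
      R (FreeGroup.of k) = if k = i then FreeGroup.of i * FreeGroup.of j
        else FreeGroup.of k := by
    intro i j hij
    obtain ⟨π, hπ0, hπ1⟩ := exists_perm01 i j hij
    refine ⟨permAut π * ρ * (permAut π)⁻¹,
      N.mul_mem (N.mul_mem (hPerm _) hρN) (N.inv_mem (hPerm _)), fun k => ?_⟩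
    rw [MulAut.mul_apply, MulAut.mul_apply, ← permAut_inv, permAut_of, hρ (π⁻¹ k)]
    by_cases hk : k = i
    · subst hk
      rw [if_pos (show π⁻¹ k = 0 by rw [← hπ0, Equiv.Perm.inv_def, Equiv.symm_apply_apply]),
        _root_.map_mul, permAut_of, permAut_of, hπ0, hπ1, if_pos rfl]
    · rw [if_neg (show π⁻¹ k ≠ 0 from fun h => hk (by
        rw [← hπ0, ← h, Equiv.Perm.inv_def, Equiv.apply_symm_apply])), permAut_of,
        Equiv.Perm.inv_def, Equiv.apply_symm_apply, if_neg hk]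
  -- all four elementary Nielsen moves
  have hMoveR : ∀ i j : Fin (m + 3), i ≠ j → ∀ d : Bool, ∃ M ∈ N, ∀ k,
      M (FreeGroup.of k) = if k = i then FreeGroup.of i * gen (j, d)
        else FreeGroup.of k := by
    intro i j hij d
    obtain ⟨R, hRN, hR⟩ := hR0 i j hij
    cases d
    · obtain ⟨E, hEN, hEact⟩ := hEi j
      refine ⟨E * R * E, N.mul_mem (N.mul_mem hEN hRN) hEN, fun k => ?_⟩
      rw [MulAut.mul_apply, MulAut.mul_apply, hEact k]
      by_cases hk : k = i
      · subst hk
        rw [if_neg hij, hR k, if_pos rfl, _root_.map_mul, hEact k, if_neg hij,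
          hEact j, if_pos rfl, if_pos rfl]
        rfl
      · by_cases hkj : k = j
        · subst hkj
          rw [if_pos rfl, _root_.map_inv, hR k, if_neg hk, _root_.map_inv, hEact k,
            if_pos rfl, inv_inv, if_neg hk]
        · rw [if_neg hkj, hR k, if_neg hk, hEact k, if_neg hkj, if_neg hk]
    · refine ⟨R, hRN, fun k => ?_⟩
      rw [hR k]
      rfl
  have hMoveLfalse : ∀ i j : Fin (m + 3), i ≠ j → ∃ M ∈ N, ∀ k,
      M (FreeGroup.of k) = if k = i then gen (j, false) * FreeGroup.of i
        else FreeGroup.of k := by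
    intro i j hij
    obtain ⟨R, hRN, hR⟩ := hR0 i j hij
    obtain ⟨E, hEN, hEact⟩ := hEi i
    refine ⟨E * R * E, N.mul_mem (N.mul_mem hEN hRN) hEN, fun k => ?_⟩
    rw [MulAut.mul_apply, MulAut.mul_apply, hEact k]
    by_cases hk : k = i
    · subst hk
      rw [if_pos rfl, _root_.map_inv, hR k, if_pos rfl, mul_inv_rev, _root_.map_mul,
        _root_.map_inv, _root_.map_inv, hEact k, if_pos rfl, hEact j,
        if_neg (fun h => hij h.symm), inv_inv, if_pos rfl]
      rfl
    · rw [if_neg hk, hR k, if_neg hk, hEact k, if_neg hk, if_neg hk]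
  have hMoveL : ∀ i j : Fin (m + 3), i ≠ j → ∀ d : Bool, ∃ M ∈ N, ∀ k,
      M (FreeGroup.of k) = if k = i then gen (j, d) * FreeGroup.of i
        else FreeGroup.of k := by
    intro i j hij d
    obtain ⟨M0, hM0N, hM0⟩ := hMoveLfalse i j hij
    cases d
    · exact ⟨M0, hM0N, hM0⟩
    · obtain ⟨E, hEN, hEact⟩ := hEi j
      refine ⟨E * M0 * E, N.mul_mem (N.mul_mem hEN hM0N) hEN, fun k => ?_⟩
      rw [MulAut.mul_apply, MulAut.mul_apply, hEact k]
      by_cases hk : k = i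
      · subst hk
        rw [if_neg hij, hM0 k, if_pos rfl, _root_.map_mul, hEact k, if_neg hij]
        show E (gen (j, false)) * FreeGroup.of k = _
        rw [show (gen (j, false) : FreeGroup (Fin (m + 3))) = (FreeGroup.of j)⁻¹ from
          (gen_eq _), _root_.map_inv, hEact j, if_pos rfl, inv_inv, if_pos rfl]
        rfl
      · by_cases hkj : k = j
        · subst hkj
          rw [if_pos rfl, _root_.map_inv, hM0 k, if_neg hk, _root_.map_inv, hEact k,
            if_pos rfl, inv_inv, if_neg hk]
        · rw [if_neg hkj, hM0 k, if_neg hk, hEact k, if_neg hkj, if_neg hk]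
  -- inversions over arbitrary finsets, and the base permutation automorphisms
  have hES : ∀ S : Finset (Fin (m + 3)), ∃ E ∈ N, ∀ k,
      E (FreeGroup.of k) = if k ∈ S then (FreeGroup.of k)⁻¹ else FreeGroup.of k := by
    intro S
    induction S using Finset.induction_on with
    | empty =>
      exact ⟨1, N.one_mem, fun k => by
        rw [MulAut.one_apply, if_neg (Finset.notMem_empty k)]⟩
    | @insert a S ha ih =>
      obtain ⟨E1, hE1N, hE1⟩ := hEi a
      obtain ⟨E2, hE2N, hE2⟩ := ih
      refine ⟨E1 * E2, N.mul_mem hE1N hE2N, fun k => ?_⟩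
      rw [MulAut.mul_apply, hE2 k]
      by_cases hk : k ∈ S
      · have hka : k ≠ a := fun h => ha (h ▸ hk)
        rw [if_pos hk, _root_.map_inv, hE1 k, if_neg hka,
          if_pos (Finset.mem_insert_of_mem hk)]
      · rw [if_neg hk, hE1 k]
        by_cases hka : k = a
        · subst hka
          rw [if_pos rfl, if_pos (Finset.mem_insert_self k S)]
        · rw [if_neg hka, if_neg (by simp [Finset.mem_insert, hka, hk])]
  have hBase : ∀ (g : Equiv.Perm (Fin (m + 3))) (sg : Fin (m + 3) → Bool), ∃ ψ ∈ N, ∀ k,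
      ψ (FreeGroup.of (g k)) = gen (k, sg k) := by
    intro g sg
    obtain ⟨E, hEN, hEact⟩ := hES (Finset.univ.filter (fun k => sg k = false))
    refine ⟨E * permAut g⁻¹, N.mul_mem hEN (hPerm _), fun k => ?_⟩
    rw [MulAut.mul_apply, permAut_of, Equiv.Perm.inv_def, Equiv.symm_apply_apply, hEact k]
    cases hks : sg k
    · rw [if_pos (by simp [hks]), gen_eq]
      rfl
    · rw [if_neg (by simp [hks]), gen_eq]
      rfl
  exact key N hMoveR hMoveL hBase φ
end
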